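/- Let θ be a partial action of a group G on a partial algebra 𝒜 such that each domain D_{x} is a subalgebra of 𝒜 (closed under all defined operations). Then for every operation f, all a₁,…,aₙ and x ∈ G: if f(a₁,…,aₙ) and x·a₁,…,x·aₙ are defined, then f(x·a₁,…,x·aₙ) and x·f(a₁,…,aₙ) are defined and equal. Consequently (θ,𝒜) admits a globalization in the category of global actions on partial algebras. -/

import Mathlib

universe u

def IsPartialAction {G A : Type u} [Group G] (θ : G → A → Option A) : Prop :=
  (∀ a, θ 1 a = some a) ∧
  (∀ x a b, θ x a = some b → θ x⁻¹ b = some a) ∧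
  (∀ x y a b c, θ y a = some b → θ x b = some c → θ (x * y) a = some c)

/-- The relation `(x,a) ∼ (y,b) ↔ θ(y⁻¹x, a) = b` on `G × A`. -/
def glueRel {G A : Type u} [Group G] (θ : G → A → Option A) : G × A → G × A → Prop :=
  fun p q => θ (q.1⁻¹ * p.1) p.2 = some q.2

/-- A partial action of `G` on the partial algebra `(A, F)` of type `(γ, n)`:
a partial action on the set `A` such that each `θₓ` is an isomorphism between
relative subalgebras: if all `x·aᵢ` and `x·f(a)` are defined, then
`f(x·a₁,…,x·aₙ)` is defined and equals `x·f(a₁,…,aₙ)`. -/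
def IsPartialAlgAction {G γ A : Type u} [Group G] (n : γ → ℕ)
    (θ : G → A → Option A) (F : ∀ g, (Fin (n g) → A) → Option A) : Prop :=
  IsPartialAction θ ∧
  ∀ (x : G) (g : γ) (a b : Fin (n g) → A) (u c : A),
    (∀ i, θ x (a i) = some (b i)) → F g a = some u → θ x u = some c →
    F g b = some c

/-- `(θ, (A,F))` admits a globalization in the category of global actions on
partial algebras: a partial algebra `(B, FB)` with a global action of `G` by
automorphisms and an injective homomorphism `ι : A → B` whose image is a relative
subalgebra, such that `θ(x,a)` is defined iff `x·ι(a) ∈ ι(A)`. -/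
def HasPAlgGlobalization {G γ A : Type u} [Group G] (n : γ → ℕ)
    (θ : G → A → Option A) (F : ∀ g, (Fin (n g) → A) → Option A) : Prop :=
  ∃ (B : Type u) (FB : ∀ g, (Fin (n g) → B) → Option B)
    (act : G → B → B) (ι : A → B),
    (∀ b, act 1 b = b) ∧
    (∀ x y b, act x (act y b) = act (x * y) b) ∧
    (∀ (x : G) (g : γ) (b : Fin (n g) → B),
      FB g (fun i => act x (b i)) = Option.map (act x) (FB g b)) ∧
    Function.Injective ι ∧
    (∀ (g : γ) (a : Fin (n g) → A) (u : A),
      F g a = some u → FB g (fun i => ι (a i)) = some (ι u)) ∧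
    (∀ (g : γ) (a : Fin (n g) → A) (c : A),
      FB g (fun i => ι (a i)) = some (ι c) → F g a = some c) ∧
    (∀ x a b, θ x a = some b → act x (ι a) = ι b) ∧
    (∀ (x : G) (a : A), (θ x a).isSome ↔ act x (ι a) ∈ Set.range ι)

def glueSetoid {G A : Type u} [Group G] (θ : G → A → Option A)
    (h : IsPartialAction θ) : Setoid (G × A) where
  r := glueRel θ
  iseqv := by
    obtain ⟨h1, hinv, hcomp⟩ := h
    refine ⟨fun p => ?_, fun {p q} hpq => ?_, fun {p q r} hpq hqr => ?_⟩
    · show θ (p.1⁻¹ * p.1) p.2 = some p.2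
      rw [inv_mul_cancel]; exact h1 p.2
    · show θ (p.1⁻¹ * q.1) q.2 = some p.2
      have := hinv _ _ _ hpq
      rwa [mul_inv_rev, inv_inv] at this
    · show θ (r.1⁻¹ * p.1) p.2 = some r.2
      have := hcomp _ _ _ _ _ hpq hqr
      rwa [mul_assoc, mul_inv_cancel_left] at this

def glueAct {G A : Type u} [Group G] {θ : G → A → Option A}
    (h : IsPartialAction θ) (x : G) :
    Quotient (glueSetoid θ h) → Quotient (glueSetoid θ h) :=
  Quotient.map (fun p => (x * p.1, p.2)) (by
    intro p q hpq
    show θ ((x * q.1)⁻¹ * (x * p.1)) p.2 = some q.2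
    rwa [mul_inv_rev, mul_assoc, inv_mul_cancel_left])

theorem glueAct_mk {G A : Type u} [Group G] {θ : G → A → Option A}
    (h : IsPartialAction θ) (x : G) (p : G × A) :
    glueAct h x (Quotient.mk (glueSetoid θ h) p) =
      Quotient.mk (glueSetoid θ h) (x * p.1, p.2) := rfl

theorem glueAct_one {G A : Type u} [Group G] {θ : G → A → Option A}
    (h : IsPartialAction θ) (v : Quotient (glueSetoid θ h)) :
    glueAct h 1 v = v := by
  induction v using Quotient.inductionOn with
  | h p => rw [glueAct_mk]; simp

theorem glueAct_comp {G A : Type u} [Group G] {θ : G → A → Option A}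
    (h : IsPartialAction θ) (x y : G) (v : Quotient (glueSetoid θ h)) :
    glueAct h x (glueAct h y v) = glueAct h (x * y) v := by
  induction v using Quotient.inductionOn with
  | h p => rw [glueAct_mk, glueAct_mk, glueAct_mk, mul_assoc]

open Classical in
noncomputable def glueF {G γ A : Type u} [Group G] {θ : G → A → Option A}
    (h : IsPartialAction θ) (n : γ → ℕ)
    (F : ∀ g, (Fin (n g) → A) → Option A) (g : γ)
    (b : Fin (n g) → Quotient (glueSetoid θ h)) : Option (Quotient (glueSetoid θ h)) :=
  if hb : ∃ p : G × (Fin (n g) → A) × A,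
      (∀ i, b i = Quotient.mk (glueSetoid θ h) (p.1, p.2.1 i)) ∧ F g p.2.1 = some p.2.2
  then some (Quotient.mk (glueSetoid θ h) (hb.choose.1, hb.choose.2.2))
  else none

theorem glueF_eq {G γ A : Type u} [Group G] {n : γ → ℕ} {θ : G → A → Option A}
    {F : ∀ g, (Fin (n g) → A) → Option A} (h : IsPartialAlgAction n θ F)
    (hsub : ∀ (x : G) (g : γ) (a : Fin (n g) → A) (u : A),
      (∀ i, (θ x (a i)).isSome) → F g a = some u → (θ x u).isSome)
    (g : γ) (b : Fin (n g) → Quotient (glueSetoid θ h.1))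
    (x : G) (a : Fin (n g) → A) (u : A)
    (hb : ∀ i, b i = Quotient.mk (glueSetoid θ h.1) (x, a i)) (hF : F g a = some u) :
    glueF h.1 n F g b = some (Quotient.mk (glueSetoid θ h.1) (x, u)) := by
  have hex : ∃ p : G × (Fin (n g) → A) × A,
      (∀ i, b i = Quotient.mk (glueSetoid θ h.1) (p.1, p.2.1 i)) ∧ F g p.2.1 = some p.2.2 :=
    ⟨(x, a, u), hb, hF⟩
  rw [glueF, dif_pos hex]
  congr 1
  obtain ⟨hb', hF'⟩ := hex.choose_spec
  set p := hex.choose with hp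
  -- relate the two representatives
  have hrel : ∀ i, θ (x⁻¹ * p.1) (p.2.1 i) = some (a i) := by
    intro i
    have : Quotient.mk (glueSetoid θ h.1) (p.1, p.2.1 i) =
        Quotient.mk (glueSetoid θ h.1) (x, a i) := by rw [← hb' i, hb i]
    exact Quotient.exact this
  have hdef : (θ (x⁻¹ * p.1) p.2.2).isSome := by
    refine hsub _ g p.2.1 p.2.2 (fun i => ?_) hF'
    rw [hrel i]; exact rfl
  obtain ⟨c, hc⟩ := Option.isSome_iff_exists.mp hdef
  have : F g a = some c := h.2 _ g p.2.1 a p.2.2 c hrel hF' hc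
  have hcu : c = u := by rw [this] at hF; exact Option.some.inj hF
  apply Quotient.sound
  show θ (x⁻¹ * p.1) p.2.2 = some u
  rw [hc, hcu]

theorem glueF_some {G γ A : Type u} [Group G] {n : γ → ℕ} {θ : G → A → Option A}
    {F : ∀ g, (Fin (n g) → A) → Option A} (h : IsPartialAction θ)
    (g : γ) (b : Fin (n g) → Quotient (glueSetoid θ h))
    (v : Quotient (glueSetoid θ h)) (hv : glueF h n F g b = some v) :
    ∃ (x : G) (a : Fin (n g) → A) (u : A),
      (∀ i, b i = Quotient.mk (glueSetoid θ h) (x, a i)) ∧ F g a = some u ∧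
      v = Quotient.mk (glueSetoid θ h) (x, u) := by
  rw [glueF] at hv
  split at hv
  · next hex =>
    obtain ⟨hb', hF'⟩ := hex.choose_spec
    exact ⟨hex.choose.1, hex.choose.2.1, hex.choose.2.2, hb', hF',
      (Option.some.inj hv).symm⟩
  · exact absurd hv (by simp)

/-- if each domain `D_{x⁻¹} = {a : x·a defined}` is a subalgebra (closed
under all defined operations), then whenever `f(a₁,…,aₙ)` and all `x·aᵢ` are defined,
both `f(x·a₁,…,x·aₙ)` and `x·f(a₁,…,aₙ)` are defined and equal; consequently
`(θ,𝒜)` admits a globalization. -/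
theorem stmt_8 {G γ A : Type u} [Group G] (n : γ → ℕ)
    (θ : G → A → Option A) (F : ∀ g, (Fin (n g) → A) → Option A)
    (h : IsPartialAlgAction n θ F)
    (hsub : ∀ (x : G) (g : γ) (a : Fin (n g) → A) (u : A),
      (∀ i, (θ x (a i)).isSome) → F g a = some u → (θ x u).isSome) :
    (∀ (x : G) (g : γ) (a b : Fin (n g) → A) (u : A),
      (∀ i, θ x (a i) = some (b i)) → F g a = some u →
      ∃ c, θ x u = some c ∧ F g b = some c) ∧
    HasPAlgGlobalization n θ F := by
  constructor
  · intro x g a b u ha hF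
    have hs : (θ x u).isSome := hsub x g a u (fun i => by rw [ha i]; exact rfl) hF
    obtain ⟨c, hc⟩ := Option.isSome_iff_exists.mp hs
    exact ⟨c, hc, h.2 x g a b u c ha hF hc⟩
  · refine ⟨Quotient (glueSetoid θ h.1), glueF h.1 n F, glueAct h.1,
      fun a => Quotient.mk (glueSetoid θ h.1) (1, a),
      glueAct_one h.1, glueAct_comp h.1, ?_, ?_, ?_, ?_, ?_, ?_⟩
    · -- equivariance of glueF
      intro x g b
      rcases hvb : glueF h.1 n F g b with _ | v
      · rw [Option.map_none]
        rcases hvb' : glueF h.1 n F g (fun i => glueAct h.1 x (b i)) with _ | w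
        · rfl
        · exfalso
          obtain ⟨y, a, u, hbi, hFa, _⟩ := glueF_some h.1 g _ w hvb'
          have hbi' : ∀ i, b i = Quotient.mk (glueSetoid θ h.1) (x⁻¹ * y, a i) := by
            intro i
            have := congrArg (glueAct h.1 x⁻¹) (hbi i)
            rwa [glueAct_comp, inv_mul_cancel, glueAct_one, glueAct_mk] at this
          rw [glueF_eq h hsub g b (x⁻¹ * y) a u hbi' hFa] at hvb
          exact Option.some_ne_none _ hvb
      · obtain ⟨y, a, u, hbi, hFa, hveq⟩ := glueF_some h.1 g _ v hvb
        rw [Option.map_some]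
        have : ∀ i, glueAct h.1 x (b i) =
            Quotient.mk (glueSetoid θ h.1) (x * y, a i) := by
          intro i; rw [hbi i, glueAct_mk]
        rw [glueF_eq h hsub g _ (x * y) a u this hFa, hveq, glueAct_mk]
    · -- injectivity
      intro a b hab
      have := Quotient.exact hab
      have : θ ((1 : G)⁻¹ * 1) a = some b := this
      rw [inv_one, one_mul, h.1.1 a] at this
      exact Option.some.inj this
    · -- F g a = some u → FB g (ι ∘ a) = some (ι u)
      intro g a u hF
      exact glueF_eq h hsub g _ 1 a u (fun i => rfl) hF
    · -- converse
      intro g a c hFB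
      obtain ⟨x, a', u, hbi, hFa', hveq⟩ := glueF_some h.1 g _ _ hFB
      -- ι (a i) = mk (x, a' i): θ (x⁻¹ * 1) (a i) = some (a' i)
      have h1 : ∀ i, θ x⁻¹ (a i) = some (a' i) := by
        intro i
        have := Quotient.exact (hbi i)
        have : θ (x⁻¹ * 1) (a i) = some (a' i) := this
        rwa [mul_one] at this
      have h2 : ∀ i, θ x (a' i) = some (a i) := by
        intro i
        have := h.1.2.1 _ _ _ (h1 i)
        rwa [inv_inv] at this
      -- v = mk (x, u) equals ι c = mk (1, c): θ (1⁻¹ * x) u = some c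
      have h3 : θ x u = some c := by
        have := Quotient.exact hveq.symm
        have : θ ((1 : G)⁻¹ * x) u = some c := this
        rwa [inv_one, one_mul] at this
      exact h.2 x g a' a u c h2 hFa' h3
    · -- θ x a = some b → act x (ι a) = ι b
      intro x a b hab
      rw [glueAct_mk]
      apply Quotient.sound
      show θ ((1 : G)⁻¹ * (x * 1)) a = some b
      rwa [inv_one, one_mul, mul_one]
    · -- isSome iff
      intro x a
      constructor
      · intro hs
        obtain ⟨b, hb⟩ := Option.isSome_iff_exists.mp hs
        refine ⟨b, ?_⟩
        rw [glueAct_mk]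
        exact (Quotient.sound (show θ ((1 : G)⁻¹ * (x * 1)) a = some b by
          rw [inv_one, one_mul, mul_one]; exact hb)).symm
      · rintro ⟨b, hb⟩
        rw [glueAct_mk] at hb
        have := Quotient.exact hb.symm
        have : θ ((1:G)⁻¹ * (x * 1)) a = some b := this
        rw [inv_one, one_mul, mul_one] at this
        rw [this]; exact rfl
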